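/- Let A be a real M×N matrix such that AA* is invertible. Suppose y = Ax + e, where x ∈ ℝ^N is s-sparse with support S and e ∈ ℝ^M. Let μ′ ∈ ℝ^N be s′-sparse and let T be an index set of t largest absolute entries of the vector μ′ + A*(AA*)⁻¹(y − Aμ′), with t ≥ s (that is, |T| = t and every entry of μ′ + A*(AA*)⁻¹(y − Aμ′) indexed by T has absolute value at least that of every entry indexed outside T). Then ‖x_{T^c}‖₂ ≤ √2 · (γ_{s+s′+t}(A) · ‖x − μ′‖₂ + √(1+θ_{t+s}(A)) · ‖e‖₂). -/

import Mathlib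

open Matrix

/-- The Euclidean (ℓ²) norm of a vector in ℝⁿ. -/
noncomputable def norm2 {n : ℕ} (x : Fin n → ℝ) : ℝ := Real.sqrt (∑ i, x i ^ 2)

/-- `x` is `s`-sparse: it has at most `s` nonzero entries. -/
def sparse {n : ℕ} (s : ℕ) (x : Fin n → ℝ) : Prop :=
  (Finset.univ.filter fun i => x i ≠ 0).card ≤ s

/-- `restrict T x` is the vector agreeing with `x` on `T` and zero outside `T`. -/
def restrict {n : ℕ} (T : Finset (Fin n)) (x : Fin n → ℝ) : Fin n → ℝ :=
  fun i => if i ∈ T then x i else 0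

section
open scoped ComplexOrder
noncomputable def Matrix.PosSemidef.sqrt {n 𝕜 : Type*} [Fintype n] [RCLike 𝕜] [DecidableEq n]
    {A : Matrix n n 𝕜} (hA : Matrix.PosSemidef A) : Matrix n n 𝕜 :=
  hA.1.eigenvectorUnitary.1 * diagonal ((↑) ∘ (√·) ∘ hA.1.eigenvalues) *
  (star hA.1.eigenvectorUnitary : Matrix n n 𝕜)
end

/-- The preconditioned matrix `(AAᴴ)^{-1/2} A`, where `(AAᴴ)^{-1/2}` is the inverse of the
positive semidefinite square root of `AAᴴ`. -/
noncomputable def precond {M N : ℕ} (A : Matrix (Fin M) (Fin N) ℝ) :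
    Matrix (Fin M) (Fin N) ℝ :=
  ((Matrix.posSemidef_self_mul_conjTranspose A).sqrt)⁻¹ * A

/-- The preconditioned restricted isometry constant `γ_s(A)`: the smallest `γ ≥ 0` such that
`(1-γ)‖x‖₂² ≤ ‖(AAᴴ)^{-1/2}Ax‖₂²` for all `s`-sparse `x`. -/
noncomputable def pripConst {M N : ℕ} (A : Matrix (Fin M) (Fin N) ℝ) (s : ℕ) : ℝ :=
  sInf {γ : ℝ | 0 ≤ γ ∧ ∀ x : Fin N → ℝ, sparse s x →
    (1 - γ) * norm2 x ^ 2 ≤ norm2 ((precond A).mulVec x) ^ 2}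

/-- The restricted isometry constant `δ_s(B)`: the smallest `δ ≥ 0` such that
`(1-δ)‖x‖₂² ≤ ‖Bx‖₂² ≤ (1+δ)‖x‖₂²` for all `s`-sparse `x`. -/
noncomputable def ripConst {m n : ℕ} (B : Matrix (Fin m) (Fin n) ℝ) (s : ℕ) : ℝ :=
  sInf {δ : ℝ | 0 ≤ δ ∧ ∀ x : Fin n → ℝ, sparse s x →
    (1 - δ) * norm2 x ^ 2 ≤ norm2 (B.mulVec x) ^ 2 ∧
      norm2 (B.mulVec x) ^ 2 ≤ (1 + δ) * norm2 x ^ 2}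

/-- `θ_t(A) = δ_t((AAᴴ)⁻¹A)`. -/
noncomputable def thetaConst {M N : ℕ} (A : Matrix (Fin M) (Fin N) ℝ) (t : ℕ) : ℝ :=
  ripConst ((A * Aᴴ)⁻¹ * A) t

lemma Matrix.PosSemidef.sqrt_mul_self {m : ℕ} {A : Matrix (Fin m) (Fin m) ℝ}
    (hA : A.PosSemidef) : hA.sqrt * hA.sqrt = A := by
  have hU : (star hA.1.eigenvectorUnitary : Matrix (Fin m) (Fin m) ℝ) *
      hA.1.eigenvectorUnitary = 1 := Unitary.coe_star_mul_self _
  unfold Matrix.PosSemidef.sqrt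
  have h : ∀ U D V : Matrix (Fin m) (Fin m) ℝ, U * D * V * (U * D * V) = U * (D * (V * U) * D) * V := by
    intros; simp only [Matrix.mul_assoc]
  rw [h, hU, Matrix.mul_one, diagonal_mul_diagonal]
  conv_rhs => rw [hA.1.spectral_theorem, Unitary.conjStarAlgAut_apply]
  congr 3
  funext i
  simp [Real.mul_self_sqrt (hA.eigenvalues_nonneg i)]
lemma Matrix.PosSemidef.sqrt_herm' {m : ℕ} {A : Matrix (Fin m) (Fin m) ℝ}
    (hA : A.PosSemidef) : hA.sqrtᴴ = hA.sqrt := by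
  unfold Matrix.PosSemidef.sqrt
  simp only [Matrix.star_eq_conjTranspose, Matrix.conjTranspose_mul,
    Matrix.conjTranspose_conjTranspose, diagonal_conjTranspose, star_trivial, Matrix.mul_assoc]

namespace CSaux5

/-! ### Basic facts about `norm2` -/

lemma norm2_nonneg {n : ℕ} (x : Fin n → ℝ) : 0 ≤ norm2 x := Real.sqrt_nonneg _

lemma norm2_sq {n : ℕ} (x : Fin n → ℝ) : norm2 x ^ 2 = ∑ i, x i ^ 2 :=
  Real.sq_sqrt (by positivity)

lemma dot_self_eq {n : ℕ} (x : Fin n → ℝ) : x ⬝ᵥ x = norm2 x ^ 2 := by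
  rw [norm2_sq]; simp [dotProduct, sq]

lemma dot_le {n : ℕ} (x y : Fin n → ℝ) : x ⬝ᵥ y ≤ norm2 x * norm2 y := by
  have h := Finset.sum_mul_sq_le_sq_mul_sq Finset.univ x y
  have h2 : (x ⬝ᵥ y) ^ 2 ≤ (norm2 x * norm2 y) ^ 2 := by
    rw [mul_pow, norm2_sq, norm2_sq]; exact h
  have hnn : 0 ≤ norm2 x * norm2 y := mul_nonneg (norm2_nonneg x) (norm2_nonneg y)
  nlinarith [h2, hnn]

lemma norm2_add_le {n : ℕ} (x y : Fin n → ℝ) : norm2 (x + y) ≤ norm2 x + norm2 y := by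
  have h1 : norm2 (x + y) ^ 2 ≤ (norm2 x + norm2 y) ^ 2 := by
    rw [norm2_sq]
    have h : ∑ i, (x + y) i ^ 2 = x ⬝ᵥ x + 2 * (x ⬝ᵥ y) + y ⬝ᵥ y := by
      simp only [Pi.add_apply, dotProduct]
      rw [Finset.mul_sum, ← Finset.sum_add_distrib, ← Finset.sum_add_distrib]
      apply Finset.sum_congr rfl; intros; ring
    rw [h, dot_self_eq, dot_self_eq]
    have := dot_le x y; nlinarith
  have := norm2_nonneg (x + y)
  nlinarith [add_nonneg (norm2_nonneg x) (norm2_nonneg y)]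

lemma norm2_sub_le {n : ℕ} (x y : Fin n → ℝ) : norm2 (x - y) ≤ norm2 x + norm2 y := by
  have h : x - y = x + (-y) := by ring
  rw [h]
  refine (norm2_add_le x (-y)).trans ?_
  have h2 : norm2 (-y) = norm2 y := by simp [norm2]
  rw [h2]

lemma norm2_le_of_sq_le {n m : ℕ} {a : Fin n → ℝ} {b : Fin m → ℝ}
    (h : norm2 a ^ 2 ≤ norm2 b ^ 2) : norm2 a ≤ norm2 b := by
  have ha := norm2_nonneg a
  have hb := norm2_nonneg b
  nlinarith

lemma norm2_restrict_sq {n : ℕ} (U : Finset (Fin n)) (u : Fin n → ℝ) :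
    norm2 (restrict U u) ^ 2 = ∑ i ∈ U, u i ^ 2 := by
  rw [norm2_sq]
  simp only [restrict]
  rw [Finset.sum_congr rfl (fun i _ => apply_ite (· ^ 2) (i ∈ U) (u i) 0)]
  simp [Finset.sum_ite_mem]

/-! ### Sparsity -/

lemma sparse_of_support_subset {n : ℕ} {U : Finset (Fin n)} {x : Fin n → ℝ}
    (h : ∀ i, x i ≠ 0 → i ∈ U) {k : ℕ} (hc : U.card ≤ k) : sparse k x := by
  refine le_trans (Finset.card_le_card ?_) hc
  intro i hi
  exact h i (Finset.mem_filter.mp hi).2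

lemma restrict_sparse {n : ℕ} {U : Finset (Fin n)} (u : Fin n → ℝ) {k : ℕ}
    (hc : U.card ≤ k) : sparse k (restrict U u) := by
  refine sparse_of_support_subset (fun i hi => ?_) hc
  by_contra h
  exact hi (by simp [restrict, h])

/-! ### Extraction of the defining properties from the `sInf` constants -/

lemma pripConst_nonempty {M N : ℕ} (A : Matrix (Fin M) (Fin N) ℝ) (k : ℕ) :
    (1 : ℝ) ∈ {γ : ℝ | 0 ≤ γ ∧ ∀ x : Fin N → ℝ, sparse k x →
      (1 - γ) * norm2 x ^ 2 ≤ norm2 ((precond A).mulVec x) ^ 2} := by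
  refine ⟨zero_le_one, fun x _ => ?_⟩
  simp only [sub_self, zero_mul]
  positivity

lemma pripConst_nonneg {M N : ℕ} (A : Matrix (Fin M) (Fin N) ℝ) (k : ℕ) :
    0 ≤ pripConst A k :=
  le_csInf ⟨1, pripConst_nonempty A k⟩ (fun γ hγ => hγ.1)

lemma pripConst_bound {M N : ℕ} (A : Matrix (Fin M) (Fin N) ℝ) (k : ℕ)
    {v : Fin N → ℝ} (hv : sparse k v) :
    norm2 v ^ 2 - norm2 ((precond A).mulVec v) ^ 2 ≤ pripConst A k * norm2 v ^ 2 := by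
  by_cases h0 : norm2 v ^ 2 = 0
  · rw [h0, mul_zero]
    have : 0 ≤ norm2 ((precond A).mulVec v) ^ 2 := sq_nonneg _
    linarith
  · have hpos : 0 < norm2 v ^ 2 := lt_of_le_of_ne (sq_nonneg _) (Ne.symm h0)
    have hlb : (norm2 v ^ 2 - norm2 ((precond A).mulVec v) ^ 2) / norm2 v ^ 2
        ≤ pripConst A k := by
      refine le_csInf ⟨1, pripConst_nonempty A k⟩ (fun γ hγ => ?_)
      have h := hγ.2 v hv
      rw [div_le_iff₀ hpos]
      nlinarith
    calc norm2 v ^ 2 - norm2 ((precond A).mulVec v) ^ 2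
        = (norm2 v ^ 2 - norm2 ((precond A).mulVec v) ^ 2) / norm2 v ^ 2 * norm2 v ^ 2 := by
          exact (div_mul_cancel₀ _ h0).symm
      _ ≤ pripConst A k * norm2 v ^ 2 := by
          exact mul_le_mul_of_nonneg_right hlb hpos.le

lemma ripConst_nonempty {m n : ℕ} (B : Matrix (Fin m) (Fin n) ℝ) (k : ℕ) :
    ((∑ i, ∑ j, B i j ^ 2) + 1) ∈ {δ : ℝ | 0 ≤ δ ∧ ∀ x : Fin n → ℝ, sparse k x →
      (1 - δ) * norm2 x ^ 2 ≤ norm2 (B.mulVec x) ^ 2 ∧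
        norm2 (B.mulVec x) ^ 2 ≤ (1 + δ) * norm2 x ^ 2} := by
  have hC : (0:ℝ) ≤ ∑ i, ∑ j, B i j ^ 2 := by positivity
  refine ⟨by linarith, fun x _ => ?_⟩
  have hbd : norm2 (B.mulVec x) ^ 2 ≤ (∑ i, ∑ j, B i j ^ 2) * norm2 x ^ 2 := by
    rw [norm2_sq, norm2_sq, Finset.sum_mul]
    refine Finset.sum_le_sum (fun i _ => ?_)
    have h := Finset.sum_mul_sq_le_sq_mul_sq Finset.univ (fun j => B i j) x
    simpa [Matrix.mulVec, dotProduct] using h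
  constructor
  · have h1 : (1 - ((∑ i, ∑ j, B i j ^ 2) + 1)) * norm2 x ^ 2 ≤ 0 := by
      apply mul_nonpos_of_nonpos_of_nonneg
      · linarith
      · exact sq_nonneg _
    exact h1.trans (sq_nonneg _)
  · have h2 : (∑ i, ∑ j, B i j ^ 2) * norm2 x ^ 2
        ≤ (1 + ((∑ i, ∑ j, B i j ^ 2) + 1)) * norm2 x ^ 2 := by
      apply mul_le_mul_of_nonneg_right _ (sq_nonneg _)
      linarith
    exact hbd.trans h2

lemma ripConst_nonneg {m n : ℕ} (B : Matrix (Fin m) (Fin n) ℝ) (k : ℕ) :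
    0 ≤ ripConst B k :=
  le_csInf ⟨_, ripConst_nonempty B k⟩ (fun δ hδ => hδ.1)

lemma ripConst_upper {m n : ℕ} (B : Matrix (Fin m) (Fin n) ℝ) (k : ℕ)
    {w : Fin n → ℝ} (hw : sparse k w) :
    norm2 (B.mulVec w) ^ 2 ≤ (1 + ripConst B k) * norm2 w ^ 2 := by
  by_cases h0 : norm2 w ^ 2 = 0
  · have hw0 : w = 0 := by
      funext i
      have hs : ∑ j, w j ^ 2 = 0 := by rw [← norm2_sq]; exact h0
      have := (Finset.sum_eq_zero_iff_of_nonneg (fun j _ => sq_nonneg (w j))).mp hs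
        i (Finset.mem_univ i)
      exact pow_eq_zero_iff two_ne_zero |>.mp this
    subst hw0
    simp [Matrix.mulVec_zero, norm2]
  · have hpos : 0 < norm2 w ^ 2 := lt_of_le_of_ne (sq_nonneg _) (Ne.symm h0)
    have hlb : norm2 (B.mulVec w) ^ 2 / norm2 w ^ 2 - 1 ≤ ripConst B k := by
      refine le_csInf ⟨_, ripConst_nonempty B k⟩ (fun δ hδ => ?_)
      have h := (hδ.2 w hw).2
      rw [sub_le_iff_le_add, div_le_iff₀ hpos]
      nlinarith
    nlinarith [mul_le_mul_of_nonneg_right hlb hpos.le,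
      (div_mul_cancel₀ (norm2 (B.mulVec w) ^ 2) h0)]


lemma conjT_eq_T {m n : ℕ} (P : Matrix (Fin m) (Fin n) ℝ) : Pᴴ = Pᵀ := by
  ext i j; simp [Matrix.conjTranspose_apply, Matrix.transpose_apply]

section Mat
variable {M N : ℕ} (A : Matrix (Fin M) (Fin N) ℝ) (hA : IsUnit (A * Aᴴ).det)

lemma sqrt_herm : ((Matrix.posSemidef_self_mul_conjTranspose A).sqrt)ᴴ
    = (Matrix.posSemidef_self_mul_conjTranspose A).sqrt :=
  (Matrix.posSemidef_self_mul_conjTranspose A).sqrt_herm'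

lemma sqrt_det_unit (hA : IsUnit (A * Aᴴ).det) :
    IsUnit ((Matrix.posSemidef_self_mul_conjTranspose A).sqrt).det := by
  have h := (Matrix.posSemidef_self_mul_conjTranspose A).sqrt_mul_self
  have : IsUnit (((Matrix.posSemidef_self_mul_conjTranspose A).sqrt).det *
      ((Matrix.posSemidef_self_mul_conjTranspose A).sqrt).det) := by
    rw [← Matrix.det_mul, h]; exact hA
  exact isUnit_of_mul_isUnit_left this

lemma precond_mul_conjTranspose (hA : IsUnit (A * Aᴴ).det) :
    precond A * (precond A)ᴴ = 1 := by
  set Sq := (Matrix.posSemidef_self_mul_conjTranspose A).sqrt with hSq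
  have hdet := sqrt_det_unit A hA
  have hherm : Sqᴴ = Sq := sqrt_herm A
  have hmul : Sq * Sq = A * Aᴴ := (Matrix.posSemidef_self_mul_conjTranspose A).sqrt_mul_self
  have hinvH : (Sq⁻¹)ᴴ = Sq⁻¹ := by rw [Matrix.conjTranspose_nonsing_inv, hherm]
  calc precond A * (precond A)ᴴ = Sq⁻¹ * A * (Aᴴ * (Sq⁻¹)ᴴ) := by
        rw [precond, Matrix.conjTranspose_mul]
    _ = Sq⁻¹ * (A * Aᴴ) * Sq⁻¹ := by rw [hinvH]; simp only [Matrix.mul_assoc]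
    _ = Sq⁻¹ * (Sq * Sq) * Sq⁻¹ := by rw [hmul]
    _ = (Sq⁻¹ * Sq) * (Sq * Sq⁻¹) := by noncomm_ring
    _ = 1 := by rw [Matrix.nonsing_inv_mul _ hdet, Matrix.mul_nonsing_inv _ hdet, one_mul]

lemma inv_eq_sqrtinv_sq :
    (A * Aᴴ)⁻¹ = ((Matrix.posSemidef_self_mul_conjTranspose A).sqrt)⁻¹ *
      ((Matrix.posSemidef_self_mul_conjTranspose A).sqrt)⁻¹ := by
  conv_lhs => rw [← (Matrix.posSemidef_self_mul_conjTranspose A).sqrt_mul_self]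
  rw [Matrix.mul_inv_rev]

lemma hGA_eq : Aᴴ * (A * Aᴴ)⁻¹ * A = (precond A)ᴴ * precond A := by
  set Sq := (Matrix.posSemidef_self_mul_conjTranspose A).sqrt with hSq
  have hherm : Sqᴴ = Sq := sqrt_herm A
  have hinvH : (Sq⁻¹)ᴴ = Sq⁻¹ := by rw [Matrix.conjTranspose_nonsing_inv, hherm]
  rw [precond, Matrix.conjTranspose_mul, hinvH, inv_eq_sqrtinv_sq A]
  simp only [Matrix.mul_assoc]
  rfl

lemma hG_eq_BH : Aᴴ * (A * Aᴴ)⁻¹ = ((A * Aᴴ)⁻¹ * A)ᴴ := by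
  rw [Matrix.conjTranspose_mul, Matrix.conjTranspose_nonsing_inv,
    Matrix.conjTranspose_mul, Matrix.conjTranspose_conjTranspose]

lemma dot_mulVec_symm {n : ℕ} (Q : Matrix (Fin n) (Fin n) ℝ) (hQ : Qᴴ = Q)
    (a b : Fin n → ℝ) : a ⬝ᵥ Q.mulVec b = Q.mulVec a ⬝ᵥ b := by
  have hQt : Qᵀ = Q := by
    have h2 : Qᵀ = Qᴴ := by
      ext i j; simp [Matrix.conjTranspose_apply, Matrix.transpose_apply]
    rw [h2, hQ]
  rw [Matrix.dotProduct_mulVec, ← hQt, Matrix.vecMul_transpose, hQt]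

end Mat

end CSaux5

namespace CSaux5

lemma sum_le_sum_of_card_le {n : ℕ} {F G : Finset (Fin n)} (f : Fin n → ℝ)
    (hf : ∀ i, 0 ≤ f i) (hcard : F.card ≤ G.card)
    (hle : ∀ j ∈ F, ∀ i ∈ G, f j ≤ f i) : ∑ j ∈ F, f j ≤ ∑ i ∈ G, f i := by
  rcases G.eq_empty_or_nonempty with hG | hG
  · subst hG
    simp only [Finset.card_empty, Nat.le_zero, Finset.card_eq_zero] at hcard
    subst hcard; simp
  · have hGpos : (0:ℝ) < G.card := by
      exact_mod_cast Finset.card_pos.mpr hG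
    have h1 : ∀ j ∈ F, (G.card : ℝ) * f j ≤ ∑ i ∈ G, f i := by
      intro j hj
      calc (G.card : ℝ) * f j = ∑ _i ∈ G, f j := by rw [Finset.sum_const, nsmul_eq_mul]
        _ ≤ ∑ i ∈ G, f i := Finset.sum_le_sum (fun i hi => hle j hj i hi)
    have h2 : (G.card : ℝ) * ∑ j ∈ F, f j ≤ (F.card : ℝ) * ∑ i ∈ G, f i := by
      rw [Finset.mul_sum]
      calc ∑ j ∈ F, (G.card : ℝ) * f j ≤ ∑ _j ∈ F, ∑ i ∈ G, f i :=
            Finset.sum_le_sum h1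
        _ = (F.card : ℝ) * ∑ i ∈ G, f i := by rw [Finset.sum_const, nsmul_eq_mul]
    have hsum_nonneg : 0 ≤ ∑ i ∈ G, f i := Finset.sum_nonneg (fun i _ => hf i)
    have h3 : (F.card : ℝ) * ∑ i ∈ G, f i ≤ (G.card : ℝ) * ∑ i ∈ G, f i :=
      mul_le_mul_of_nonneg_right (Nat.cast_le.mpr hcard) hsum_nonneg
    exact le_of_mul_le_mul_left (h2.trans h3) hGpos

lemma prip_restrict_bound {M N : ℕ} (A : Matrix (Fin M) (Fin N) ℝ)
    (hA : IsUnit (A * Aᴴ).det) (k : ℕ) (U : Finset (Fin N)) (hU : U.card ≤ k)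
    (v : Fin N → ℝ) (hv : sparse k v) :
    norm2 (restrict U ((1 - (precond A)ᴴ * precond A).mulVec v))
      ≤ pripConst A k * norm2 v := by
  set P := precond A with hP
  set Q : Matrix (Fin N) (Fin N) ℝ := 1 - Pᴴ * P with hQdef
  have hQH : Qᴴ = Q := by
    rw [hQdef, Matrix.conjTranspose_sub, Matrix.conjTranspose_one,
      Matrix.conjTranspose_mul, Matrix.conjTranspose_conjTranspose]
  have hQQ : Q * Q = Q := by
    rw [hQdef]
    have h := precond_mul_conjTranspose A hA
    simp only [Matrix.mul_sub, Matrix.sub_mul, Matrix.one_mul, Matrix.mul_one]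
    rw [show Pᴴ * P * (Pᴴ * P) = Pᴴ * (P * Pᴴ) * P by
      simp only [Matrix.mul_assoc], h, Matrix.mul_one]
    abel
  have hform : ∀ u : Fin N → ℝ,
      u ⬝ᵥ Q.mulVec u = norm2 u ^ 2 - norm2 (P.mulVec u) ^ 2 := by
    intro u
    rw [hQdef, Matrix.sub_mulVec, Matrix.one_mulVec, dotProduct_sub, dot_self_eq]
    congr 1
    rw [← Matrix.mulVec_mulVec, Matrix.dotProduct_mulVec, conjT_eq_T,
      Matrix.vecMul_transpose, dot_self_eq]
  have hQsp : ∀ u : Fin N → ℝ, sparse k u →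
      u ⬝ᵥ Q.mulVec u ≤ pripConst A k * norm2 u ^ 2 := by
    intro u hu; rw [hform]; exact pripConst_bound A k hu
  set w := restrict U (Q.mulVec v) with hwdef
  have hw_sp : sparse k w := restrict_sparse _ hU
  have hdQQ : ∀ a b : Fin N → ℝ, Q.mulVec a ⬝ᵥ Q.mulVec b = a ⬝ᵥ Q.mulVec b := by
    intro a b
    calc Q.mulVec a ⬝ᵥ Q.mulVec b = a ⬝ᵥ Q.mulVec (Q.mulVec b) :=
          (dot_mulVec_symm Q hQH a _).symm
      _ = a ⬝ᵥ (Q * Q).mulVec b := by rw [Matrix.mulVec_mulVec]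
      _ = a ⬝ᵥ Q.mulVec b := by rw [hQQ]
  have h1 : w ⬝ᵥ w = w ⬝ᵥ Q.mulVec v := by
    simp only [dotProduct]
    refine Finset.sum_congr rfl (fun i _ => ?_)
    by_cases hi : i ∈ U
    · simp [hwdef, restrict, hi]
    · simp [hwdef, restrict, hi]
  set γ := pripConst A k with hγdef
  set a := norm2 w with hadef
  set b := norm2 v with hbdef
  have hγ : 0 ≤ γ := pripConst_nonneg A k
  have ha : 0 ≤ a := norm2_nonneg w
  have hb : 0 ≤ b := norm2_nonneg v
  have hQw : norm2 (Q.mulVec w) ^ 2 ≤ γ * a ^ 2 := by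
    rw [← dot_self_eq, hdQQ]; exact hQsp w hw_sp
  have hQv : norm2 (Q.mulVec v) ^ 2 ≤ γ * b ^ 2 := by
    rw [← dot_self_eq, hdQQ]; exact hQsp v hv
  have hkey : a ^ 2 = Q.mulVec w ⬝ᵥ Q.mulVec v := by
    rw [hdQQ, ← h1, dot_self_eq]
  have hcs := dot_le (Q.mulVec w) (Q.mulVec v)
  have hdnn : 0 ≤ Q.mulVec w ⬝ᵥ Q.mulVec v := hkey ▸ sq_nonneg a
  have h4 : (a ^ 2) ^ 2 ≤ (γ * a ^ 2) * (γ * b ^ 2) := by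
    have h4a : (a ^ 2) ^ 2 ≤ norm2 (Q.mulVec w) ^ 2 * norm2 (Q.mulVec v) ^ 2 := by
      rw [hkey, ← mul_pow]
      have hprod : 0 ≤ norm2 (Q.mulVec w) * norm2 (Q.mulVec v) :=
        mul_nonneg (norm2_nonneg _) (norm2_nonneg _)
      nlinarith
    refine h4a.trans ?_
    have := mul_le_mul hQw hQv (sq_nonneg _) (by positivity)
    exact this
  have h5 : a ^ 2 ≤ (γ * b) ^ 2 := by nlinarith [sq_nonneg a, sq_nonneg (a^2 - γ*b^2)]
  show a ≤ γ * b
  nlinarith [mul_nonneg hγ hb]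

lemma theta_restrict_bound {M N : ℕ} (A : Matrix (Fin M) (Fin N) ℝ) (k : ℕ)
    (U : Finset (Fin N)) (hU : U.card ≤ k) (e : Fin M → ℝ) :
    norm2 (restrict U ((Aᴴ * (A * Aᴴ)⁻¹).mulVec e))
      ≤ Real.sqrt (1 + thetaConst A k) * norm2 e := by
  set B := (A * Aᴴ)⁻¹ * A with hB
  have hθ : 0 ≤ thetaConst A k := ripConst_nonneg B k
  set w := restrict U ((Aᴴ * (A * Aᴴ)⁻¹).mulVec e) with hwdef
  have hw_sp : sparse k w := restrict_sparse _ hU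
  have h1 : w ⬝ᵥ w = w ⬝ᵥ (Aᴴ * (A * Aᴴ)⁻¹).mulVec e := by
    simp only [dotProduct]
    refine Finset.sum_congr rfl (fun i _ => ?_)
    by_cases hi : i ∈ U
    · simp [hwdef, restrict, hi]
    · simp [hwdef, restrict, hi]
  have h2 : w ⬝ᵥ (Aᴴ * (A * Aᴴ)⁻¹).mulVec e = B.mulVec w ⬝ᵥ e := by
    rw [hG_eq_BH, Matrix.dotProduct_mulVec]
    congr 1
    rw [conjT_eq_T, Matrix.vecMul_transpose]
  have h3 : B.mulVec w ⬝ᵥ e ≤ norm2 (B.mulVec w) * norm2 e := dot_le _ _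
  have h4 : norm2 (B.mulVec w) ^ 2 ≤ (1 + thetaConst A k) * norm2 w ^ 2 :=
    ripConst_upper B k hw_sp
  set a := norm2 w with hadef
  set b := norm2 e with hbdef
  set c := Real.sqrt (1 + thetaConst A k) with hcdef
  have ha : 0 ≤ a := norm2_nonneg w
  have hb : 0 ≤ b := norm2_nonneg e
  have hc : 0 ≤ c := Real.sqrt_nonneg _
  have hc2 : c ^ 2 = 1 + thetaConst A k := Real.sq_sqrt (by linarith)
  have hBw : norm2 (B.mulVec w) ≤ c * a := by
    nlinarith [norm2_nonneg (B.mulVec w), mul_nonneg hc ha, h4]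
  have hkey : a ^ 2 ≤ norm2 (B.mulVec w) * b := by
    rw [← dot_self_eq, h1, h2]; exact h3
  have hkey2 : a ^ 2 ≤ c * a * b := by
    refine hkey.trans ?_
    exact mul_le_mul_of_nonneg_right hBw hb
  show a ≤ c * b
  rcases eq_or_lt_of_le ha with h | h
  · rw [← h]; positivity
  · nlinarith

end CSaux5

open CSaux5

theorem stmt5 {M N : ℕ} (A : Matrix (Fin M) (Fin N) ℝ) (hA : IsUnit (A * Aᴴ).det)
    (s s' t : ℕ) (hts : t ≥ s) (x μ' : Fin N → ℝ) (e : Fin M → ℝ) (y : Fin M → ℝ)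
    (S : Finset (Fin N)) (hxS : ∀ i, x i ≠ 0 ↔ i ∈ S) (hx : sparse s x)
    (hμ' : sparse s' μ')
    (hy : y = A.mulVec x + e)
    (z : Fin N → ℝ)
    (hz : z = μ' + (Aᴴ * (A * Aᴴ)⁻¹).mulVec (y - A.mulVec μ'))
    (T : Finset (Fin N)) (hTcard : T.card = t)
    (hTbig : ∀ i ∈ T, ∀ j ∉ T, |z j| ≤ |z i|) :
    norm2 (restrict Tᶜ x) ≤
      Real.sqrt 2 * (pripConst A (s + s' + t) * norm2 (x - μ') +
        Real.sqrt (1 + thetaConst A (t + s)) * norm2 e) := by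
  classical
  have hScard : S.card ≤ s := by
    have hSeq : S = Finset.univ.filter (fun i => x i ≠ 0) := by
      ext i; simp [(hxS i).symm]
    rw [hSeq]; exact hx
  set k := s + s' + t with hk
  set U := S ∪ T with hU
  have hUcard : U.card ≤ s + t := by
    refine (Finset.card_union_le S T).trans ?_
    omega
  have hUk : U.card ≤ k := by omega
  set v := x - μ' with hv
  have hv_sp : sparse k v := by
    have h1 : ∀ i, v i ≠ 0 → i ∈ S ∪ Finset.univ.filter (fun i => μ' i ≠ 0) := by
      intro i hi
      rw [Finset.mem_union]
      by_cases hxi : x i = 0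
      · right
        refine Finset.mem_filter.mpr ⟨Finset.mem_univ i, fun hμi => hi ?_⟩
        rw [hv]; simp [hxi, hμi]
      · exact Or.inl ((hxS i).mp hxi)
    refine sparse_of_support_subset h1 ?_
    refine (Finset.card_union_le _ _).trans ?_
    have hμc : (Finset.univ.filter fun i => μ' i ≠ 0).card ≤ s' := hμ'
    omega
  set P := precond A with hP
  set G := Aᴴ * (A * Aᴴ)⁻¹ with hG
  have hxz : x - z = (1 - Pᴴ * P).mulVec v - G.mulVec e := by
    have h1 : y - A.mulVec μ' = A.mulVec v + e := by
      rw [hy, hv, Matrix.mulVec_sub]; abel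
    have hGA : G * A = Pᴴ * P := hGA_eq A
    rw [hz, h1, Matrix.mulVec_add, Matrix.mulVec_mulVec, hGA,
      Matrix.sub_mulVec, Matrix.one_mulVec, hv]
    abel
  have key1 : restrict Tᶜ x = restrict (S \ T) x := by
    funext i
    simp only [restrict]
    by_cases hiT : i ∈ T
    · rw [if_neg (by simp [Finset.mem_compl, hiT]),
        if_neg (by simp [Finset.mem_sdiff, hiT])]
    · rw [if_pos (Finset.mem_compl.mpr hiT)]
      by_cases hiS : i ∈ S
      · rw [if_pos (Finset.mem_sdiff.mpr ⟨hiS, hiT⟩)]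
      · rw [if_neg (by simp [Finset.mem_sdiff, hiS])]
        by_contra h
        exact hiS ((hxS i).mp h)
  have hzsum : ∑ i ∈ S \ T, z i ^ 2 ≤ ∑ i ∈ T \ S, z i ^ 2 := by
    refine sum_le_sum_of_card_le _ (fun i => sq_nonneg _) ?_ ?_
    · have h1 := Finset.card_sdiff_add_card_inter S T
      have h2 := Finset.card_sdiff_add_card_inter T S
      have h3 : (S ∩ T).card = (T ∩ S).card := by rw [Finset.inter_comm]
      omega
    · intro j hj i hi
      have hjT : j ∉ T := (Finset.mem_sdiff.mp hj).2
      have hiT : i ∈ T := (Finset.mem_sdiff.mp hi).1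
      have h := hTbig i hiT j hjT
      rw [← sq_abs (z j), ← sq_abs (z i)]
      exact pow_le_pow_left₀ (abs_nonneg _) h 2
  set u := x - z with hu
  set p := norm2 (restrict (S \ T) u) with hp
  set q := norm2 (restrict (T \ S) u) with hq
  have step1 : norm2 (restrict Tᶜ x) ≤ p + norm2 (restrict (S \ T) z) := by
    rw [key1]
    have hsplit : restrict (S \ T) x = restrict (S \ T) u + restrict (S \ T) z := by
      funext i
      simp only [restrict, Pi.add_apply, hu, Pi.sub_apply]
      by_cases hi : i ∈ S \ T <;> simp [hi]
    rw [hsplit]; exact norm2_add_le _ _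
  have step2 : norm2 (restrict (S \ T) z) ≤ q := by
    apply norm2_le_of_sq_le
    rw [norm2_restrict_sq, norm2_restrict_sq]
    refine hzsum.trans (le_of_eq ?_)
    refine Finset.sum_congr rfl (fun i hi => ?_)
    have hiS : i ∉ S := (Finset.mem_sdiff.mp hi).2
    have hxi : x i = 0 := by
      by_contra h; exact hiS ((hxS i).mp h)
    rw [hu]
    simp only [Pi.sub_apply, hxi]
    ring
  have step3 : p + q ≤ Real.sqrt 2 * norm2 (restrict U u) := by
    have hpq : p ^ 2 + q ^ 2 ≤ norm2 (restrict U u) ^ 2 := by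
      rw [hp, hq, norm2_restrict_sq, norm2_restrict_sq, norm2_restrict_sq,
        ← Finset.sum_union (disjoint_sdiff_sdiff)]
      apply Finset.sum_le_sum_of_subset_of_nonneg
      · intro i hi
        rcases Finset.mem_union.mp hi with h | h
        · exact Finset.mem_union.mpr (Or.inl (Finset.mem_sdiff.mp h).1)
        · exact Finset.mem_union.mpr (Or.inr (Finset.mem_sdiff.mp h).1)
      · intros; positivity
    have h2 : (p + q) ^ 2 ≤ (Real.sqrt 2 * norm2 (restrict U u)) ^ 2 := by
      rw [mul_pow, Real.sq_sqrt (by norm_num : (0:ℝ) ≤ 2)]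
      nlinarith [sq_nonneg (p - q)]
    have hpn : 0 ≤ p := norm2_nonneg _
    have hqn : 0 ≤ q := norm2_nonneg _
    have hrn : 0 ≤ Real.sqrt 2 * norm2 (restrict U u) :=
      mul_nonneg (Real.sqrt_nonneg 2) (norm2_nonneg _)
    nlinarith
  have step4 : norm2 (restrict U u) ≤
      norm2 (restrict U ((1 - Pᴴ * P).mulVec v)) + norm2 (restrict U (G.mulVec e)) := by
    have hsplit : restrict U u =
        restrict U ((1 - Pᴴ * P).mulVec v) - restrict U (G.mulVec e) := by
      funext i
      have hui : u i = ((1 - Pᴴ * P).mulVec v) i - (G.mulVec e) i := by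
        have h := congrFun hxz i
        rwa [Pi.sub_apply] at h
      simp only [restrict, Pi.sub_apply]
      by_cases hi : i ∈ U <;> simp [hi, hui]
    rw [hsplit]; exact norm2_sub_le _ _
  have step5 : norm2 (restrict U ((1 - Pᴴ * P).mulVec v)) ≤ pripConst A k * norm2 v :=
    prip_restrict_bound A hA k U hUk v hv_sp
  have step6 : norm2 (restrict U (G.mulVec e)) ≤
      Real.sqrt (1 + thetaConst A (t + s)) * norm2 e :=
    theta_restrict_bound A (t + s) U (by omega) e
  have h2 : (0:ℝ) ≤ Real.sqrt 2 := Real.sqrt_nonneg 2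
  calc norm2 (restrict Tᶜ x) ≤ p + norm2 (restrict (S \ T) z) := step1
    _ ≤ p + q := by linarith
    _ ≤ Real.sqrt 2 * norm2 (restrict U u) := step3
    _ ≤ Real.sqrt 2 * (pripConst A k * norm2 v +
        Real.sqrt (1 + thetaConst A (t + s)) * norm2 e) := by
        apply mul_le_mul_of_nonneg_left _ h2
        linarith [step4, step5, step6]
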